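/- Let P_k = 2·3^k + 1. Then for every integer k ≥ 1, the Hausdorff dimension of C(1, P_k) satisfies dim_H(C(1, P_k)) ≥ (1/13)·(log 2 / log 3). -/

import Mathlib

open MeasureTheory

noncomputable section

/-- The 3-adic Cantor set: 3-adic integers whose 3-adic expansion uses only digits 0 and 1. -/
def Sigma3 : Set ℤ_[3] :=
  {x | ∃ a : ℕ → ℕ, (∀ i, a i ≤ 1) ∧ x = ∑' i, (a i : ℤ_[3]) * 3 ^ i}

/-- `C1 M = C(1, M) = {x : x ∈ Σ and M·x ∈ Σ}`. -/
def C1 (M : ℕ) : Set ℤ_[3] :=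
  {x | x ∈ Sigma3 ∧ (M : ℤ_[3]) * x ∈ Sigma3}

namespace PfAux

open Finset Filter Set
open scoped NNReal ENNReal



lemma norm_three : ‖(3 : ℤ_[3])‖ = (3:ℝ)⁻¹ := by
  have := @PadicInt.norm_p 3 ⟨by norm_num⟩
  simpa using this

lemma norm_three_pow (n : ℕ) : ‖(3 : ℤ_[3])^n‖ = (3⁻¹:ℝ)^n := by
  induction n with
  | zero => simp
  | succ n ih => rw [pow_succ, norm_mul, ih, pow_succ, norm_three]

/-- digit sum -/
def dig3 (a : ℕ → ℕ) : ℤ_[3] := ∑' i, (a i : ℤ_[3]) * 3 ^ i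

lemma norm_term_le (a : ℕ → ℕ) (i : ℕ) : ‖(a i : ℤ_[3]) * 3 ^ i‖ ≤ (3⁻¹:ℝ)^i := by
  rw [norm_mul, norm_three_pow]
  have h1 : ‖((a i : ℤ_[3]))‖ ≤ 1 := PadicInt.norm_le_one _
  nlinarith [pow_pos (by norm_num : (0:ℝ) < 3⁻¹) i, pow_nonneg (by norm_num : (0:ℝ) ≤ 3⁻¹) i]

lemma summable_dig3 (a : ℕ → ℕ) : Summable (fun i => (a i : ℤ_[3]) * 3 ^ i) := by
  apply Summable.of_norm_bounded (g := fun i => (3⁻¹:ℝ)^i)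
  · exact summable_geometric_of_lt_one (by norm_num) (by norm_num)
  · exact norm_term_le a

lemma dig3_split (a : ℕ → ℕ) (N : ℕ) :
    dig3 a = (∑ i ∈ range N, (a i : ℤ_[3]) * 3 ^ i) + 3^N * dig3 (fun i => a (i + N)) := by
  have h2 : (3:ℤ_[3])^N * dig3 (fun i => a (i+N)) = ∑' i, ((a (i+N) : ℤ_[3]) * 3^(i+N)) := by
    rw [dig3]
    calc (3:ℤ_[3])^N * ∑' i, ((a (i+N) : ℤ_[3]) * 3^i)
        = ∑' i, (3:ℤ_[3])^N * ((a (i+N) : ℤ_[3]) * 3^i) := ((summable_dig3 (fun i => a (i+N))).tsum_mul_left ((3:ℤ_[3])^N)).symm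
      _ = ∑' i, ((a (i+N) : ℤ_[3]) * 3^(i+N)) := by
          apply tsum_congr; intro i; rw [pow_add]; ring
  rw [h2]
  exact (Summable.sum_add_tsum_nat_add (f := fun i => (a i : ℤ_[3]) * 3 ^ i) N (summable_dig3 a)).symm

lemma norm_dig3_le_one (a : ℕ → ℕ) : ‖dig3 a‖ ≤ 1 := PadicInt.norm_le_one _

lemma norm_dig3_sub_partial (a : ℕ → ℕ) (N : ℕ) :
    ‖dig3 a - ∑ i ∈ range N, (a i : ℤ_[3]) * 3 ^ i‖ ≤ (3⁻¹:ℝ)^N := by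
  have := dig3_split a N
  have e : dig3 a - ∑ i ∈ range N, (a i : ℤ_[3]) * 3 ^ i = 3^N * dig3 (fun i => a (i + N)) := by
    rw [this]; ring
  rw [e, norm_mul, norm_three_pow]
  have := norm_dig3_le_one (fun i => a (i + N))
  nlinarith [pow_pos (by norm_num : (0:ℝ) < 3⁻¹) N]

/-- first-difference norm -/
lemma norm_dig3_sub (a a' : ℕ → ℕ) (h1 : ∀ i, a i ≤ 1) (h1' : ∀ i, a' i ≤ 1)
    (v : ℕ) (hlt : ∀ i, i < v → a i = a' i) (hv : a v ≠ a' v) :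
    ‖dig3 a - dig3 a'‖ = (3⁻¹:ℝ)^v := by
  have hps : ∑ i ∈ range v, (a i : ℤ_[3]) * 3 ^ i = ∑ i ∈ range v, (a' i : ℤ_[3]) * 3 ^ i := by
    apply Finset.sum_congr rfl
    intro i hi
    rw [hlt i (mem_range.mp hi)]
  have e1 : dig3 a - dig3 a' = 3^v * (dig3 (fun i => a (i+v)) - dig3 (fun i => a' (i+v))) := by
    rw [dig3_split a v, dig3_split a' v, hps]; ring
  set w := dig3 (fun i => a (i+v)) - dig3 (fun i => a' (i+v)) with hw
  have e2 : dig3 (fun i => a (i+v)) = (a v : ℤ_[3]) + 3 * dig3 (fun i => a (i + 1 + v)) := by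
    have := dig3_split (fun i => a (i+v)) 1
    simp only [Finset.sum_range_one, pow_zero, mul_one, pow_one, Nat.zero_add] at this
    rw [this]
  have e2' : dig3 (fun i => a' (i+v)) = (a' v : ℤ_[3]) + 3 * dig3 (fun i => a' (i + 1 + v)) := by
    have := dig3_split (fun i => a' (i+v)) 1
    simp only [Finset.sum_range_one, pow_zero, mul_one, pow_one, Nat.zero_add] at this
    rw [this]
  have e3 : w = ((a v : ℤ_[3]) - (a' v)) +
      3 * (dig3 (fun i => a (i + 1 + v)) - dig3 (fun i => a' (i + 1 + v))) := by
    rw [hw, e2, e2']; ring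
  have hd : ‖(a v : ℤ_[3]) - (a' v)‖ = 1 := by
    have ha := h1 v; have ha' := h1' v
    interval_cases h : a v <;> interval_cases h' : a' v <;> simp_all
  have hnw : ‖w‖ = 1 := by
    rw [e3]
    have h3 : ‖(3:ℤ_[3]) * (dig3 (fun i => a (i + 1 + v)) - dig3 (fun i => a' (i + 1 + v)))‖ ≤ 3⁻¹ := by
      rw [norm_mul, norm_three]
      have : ‖dig3 (fun i => a (i + 1 + v)) - dig3 (fun i => a' (i + 1 + v))‖ ≤ 1 :=
        PadicInt.norm_le_one _
      nlinarith
    rw [PadicInt.norm_add_eq_max_of_ne (by rw [hd]; intro hcon; rw [← hcon] at h3; norm_num at h3)]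
    rw [hd]
    rw [max_eq_left (by linarith)]
  rw [e1, norm_mul, norm_three_pow, hnw, mul_one]

lemma mem_C1_of_valid (k : ℕ) (hk : 1 ≤ k) (a : ℕ → ℕ) (h1 : ∀ i, a i ≤ 1)
    (h2 : ∀ j, a (j+1) ≠ a j → a (j+1+k) = a (j+1)) (h3 : a 0 = 1 → a k = 1) :
    dig3 a ∈ C1 (2*3^k+1) := by
  classical
  set c : ℕ → ℕ := fun i => if k+1 ≤ i then a (i - (k+1)) else 0 with hc
  set bb : ℕ → ℕ := fun i => (a i + 2 * (if k ≤ i then a (i-k) else 0) + c i) % 3 with hbb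
  have loc : ∀ i, a i + 2 * (if k ≤ i then a (i-k) else 0) + c i = 3 * c (i+1) + bb i
      ∧ bb i ≤ 1 := by
    intro i
    rcases lt_or_ge i k with hik | hik
    · have hik' : ¬ (k ≤ i) := by omega
      have hc1 : c i = 0 := by simp [hc]; omega
      have hc2 : c (i+1) = 0 := by simp [hc]; omega
      simp only [hbb, hc1, hc2, if_neg hik']
      have := h1 i
      omega
    · rcases eq_or_lt_of_le hik with hik2 | hik2
      · have hc1 : c k = 0 := by simp [hc]
        have hc2 : c (k+1) = a 0 := by simp [hc]
        subst hik2
        simp only [hbb, hc1, hc2, if_pos (le_refl k), Nat.sub_self]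
        have := h1 0; have := h1 k
        rcases Nat.lt_or_ge (a 0) 1 with h0 | h0
        · have : a 0 = 0 := by omega
          simp [this]; omega
        · have ha0 : a 0 = 1 := by omega
          have hak : a k = 1 := h3 ha0
          simp [ha0, hak]
      · have hkle : k ≤ i := by omega
        have hc1 : c i = a (i - (k+1)) := by simp only [hc]; rw [if_pos (by omega)]
        have hc2 : c (i+1) = a (i - k) := by
          simp only [hc]; rw [if_pos (by omega)]; congr 1; omega
        have hval : a (i-k) ≠ a (i-(k+1)) → a i = a (i-k) := by
          intro hne
          have := h2 (i - (k+1)) (by rwa [(by omega : i - (k+1) + 1 = i - k)])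
          rwa [(by omega : i - (k+1) + 1 = i - k), (by omega : i - k + k = i)] at this
        simp only [hbb, hc1, hc2, if_pos hkle]
        have := h1 i; have := h1 (i-k); have := h1 (i-(k+1))
        omega
  have hble : ∀ i, bb i ≤ 1 := fun i => (loc i).2
  have ident : ∀ N : ℕ,
      (∑ i ∈ range N, (bb i : ℤ_[3]) * 3 ^ i) + (c N : ℤ_[3]) * 3 ^ N
      = (∑ i ∈ range N, (a i : ℤ_[3]) * 3 ^ i)
        + 2 * 3^k * ∑ i ∈ range (N-k), (a i : ℤ_[3]) * 3 ^ i := by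
    intro N
    induction N with
    | zero => simp [hc]
    | succ N ih =>
      have lN := (loc N).1
      have lNc := congrArg (fun n : ℕ => (n : ℤ_[3])) lN
      push_cast at lNc
      rcases lt_or_ge N k with hNk | hNk
      · have h0 : ¬ (k ≤ N) := by omega
        have e1 : N + 1 - k = 0 := by omega
        have e2 : N - k = 0 := by omega
        rw [if_neg h0] at lNc
        have hcN1 : c (N+1) = 0 := by simp [hc]; omega
        rw [e2] at ih
        rw [hcN1] at lNc
        rw [sum_range_succ, e1, sum_range_succ, hcN1]
        push_cast
        push_cast at lNc
        linear_combination ih - (3:ℤ_[3])^N * lNc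
      · have e1 : N + 1 - k = (N - k) + 1 := by omega
        rw [if_pos hNk] at lNc
        rw [sum_range_succ, e1, sum_range_succ, sum_range_succ]
        have hpow : (3:ℤ_[3])^k * 3^(N-k) = 3^N := by
          rw [← pow_add]; congr 1; omega
        linear_combination ih - (3:ℤ_[3])^N * lNc - 2 * ((a (N-k) : ℤ_[3])) * hpow
  have hprod : ((2*3^k+1 : ℕ) : ℤ_[3]) * dig3 a = dig3 bb := by
    have key : ∀ N : ℕ, k ≤ N →
        ‖((2*3^k+1 : ℕ) : ℤ_[3]) * dig3 a - dig3 bb‖ ≤ 4 * (3⁻¹:ℝ)^(N-k) := by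
      intro N hN
      have hP : ((2*3^k+1 : ℕ) : ℤ_[3]) = 2 * 3^k + 1 := by push_cast; ring
      set A := dig3 a - ∑ i ∈ range N, (a i : ℤ_[3]) * 3 ^ i with hA
      set B := (2:ℤ_[3]) * 3^k * (dig3 a - ∑ i ∈ range (N-k), (a i : ℤ_[3]) * 3 ^ i) with hB
      set Cc := (c N : ℤ_[3]) * 3^N with hCc
      set Dd := dig3 bb - ∑ i ∈ range N, (bb i : ℤ_[3]) * 3 ^ i with hD
      have hsplit : ((2*3^k+1 : ℕ) : ℤ_[3]) * dig3 a - dig3 bb = A + B + Cc - Dd := by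
        rw [hP, hA, hB, hCc, hD]
        linear_combination -(ident N)
      rw [hsplit]
      have hmono : ((3:ℝ)⁻¹)^N ≤ (3⁻¹:ℝ)^(N-k) := by
        apply pow_le_pow_of_le_one (by norm_num) (by norm_num); omega
      have n1 : ‖A‖ ≤ (3⁻¹:ℝ)^(N-k) := le_trans (norm_dig3_sub_partial a N) hmono
      have n3 : ‖Dd‖ ≤ (3⁻¹:ℝ)^(N-k) := le_trans (norm_dig3_sub_partial bb N) hmono
      have n2 : ‖B‖ ≤ (3⁻¹:ℝ)^(N-k) := by
        rw [hB, norm_mul, norm_mul, norm_three_pow]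
        have h2n : ‖(2:ℤ_[3])‖ ≤ 1 := PadicInt.norm_le_one _
        have hkp : ((3:ℝ)⁻¹)^k ≤ 1 := pow_le_one₀ (by norm_num) (by norm_num)
        have hmul : ‖(2:ℤ_[3])‖ * (3⁻¹:ℝ)^k ≤ 1 :=
          mul_le_one₀ h2n (by positivity) hkp
        calc ‖(2:ℤ_[3])‖ * (3⁻¹:ℝ)^k * ‖dig3 a - ∑ i ∈ range (N-k), (a i : ℤ_[3]) * 3 ^ i‖
            ≤ 1 * ‖dig3 a - ∑ i ∈ range (N-k), (a i : ℤ_[3]) * 3 ^ i‖ :=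
              mul_le_mul_of_nonneg_right hmul (norm_nonneg _)
          _ = ‖dig3 a - ∑ i ∈ range (N-k), (a i : ℤ_[3]) * 3 ^ i‖ := one_mul _
          _ ≤ (3⁻¹:ℝ)^(N-k) := norm_dig3_sub_partial a (N-k)
      have n4 : ‖Cc‖ ≤ (3⁻¹:ℝ)^(N-k) := by
        rw [hCc, norm_mul, norm_three_pow]
        have hcn : ‖((c N : ℕ) : ℤ_[3])‖ ≤ 1 := PadicInt.norm_le_one _
        calc ‖((c N : ℕ) : ℤ_[3])‖ * (3⁻¹:ℝ)^N ≤ 1 * (3⁻¹:ℝ)^N :=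
              mul_le_mul_of_nonneg_right hcn (by positivity)
          _ = (3⁻¹:ℝ)^N := one_mul _
          _ ≤ (3⁻¹:ℝ)^(N-k) := hmono
      calc ‖A + B + Cc - Dd‖ ≤ ‖A + B + Cc‖ + ‖Dd‖ := norm_sub_le _ _
        _ ≤ (‖A + B‖ + ‖Cc‖) + ‖Dd‖ := by gcongr; exact norm_add_le _ _
        _ ≤ ((‖A‖ + ‖B‖) + ‖Cc‖) + ‖Dd‖ :=
            by gcongr; exact norm_add_le _ _
        _ ≤ 4 * (3⁻¹:ℝ)^(N-k) := by linarith
    by_contra hne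
    have hpos : 0 < ‖((2*3^k+1 : ℕ) : ℤ_[3]) * dig3 a - dig3 bb‖ := by
      rw [norm_pos_iff]
      intro hz
      exact hne (by rwa [sub_eq_zero] at hz)
    obtain ⟨n, hn⟩ := exists_pow_lt_of_lt_one
      (by linarith : (0:ℝ) < ‖((2*3^k+1 : ℕ) : ℤ_[3]) * dig3 a - dig3 bb‖ / 4)
      (by norm_num : (3⁻¹:ℝ) < 1)
    have hkey := key (n + k) (by omega)
    rw [(by omega : n + k - k = n)] at hkey
    have : ‖((2*3^k+1 : ℕ) : ℤ_[3]) * dig3 a - dig3 bb‖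
        < ‖((2*3^k+1 : ℕ) : ℤ_[3]) * dig3 a - dig3 bb‖ := by
      calc ‖((2*3^k+1 : ℕ) : ℤ_[3]) * dig3 a - dig3 bb‖ ≤ 4 * (3⁻¹:ℝ)^n := hkey
        _ < 4 * (‖((2*3^k+1 : ℕ) : ℤ_[3]) * dig3 a - dig3 bb‖ / 4) := by linarith
        _ = _ := by ring
    exact lt_irrefl _ this
  refine ⟨⟨a, h1, rfl⟩, ?_⟩
  rw [hprod]
  exact ⟨bb, hble, rfl⟩



/-- binary value map -/
def bval (b : ℕ → Bool) : ℝ := ∑' j, (if b j then (2⁻¹:ℝ)^(j+1) else 0)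

lemma summable_bterm (b : ℕ → Bool) :
    Summable (fun j => (if b j then (2⁻¹:ℝ)^(j+1) else 0)) := by
  apply Summable.of_nonneg_of_le (fun j => by positivity) (fun j => ?_)
    (summable_geometric_of_lt_one (by norm_num : (0:ℝ) ≤ 2⁻¹) (by norm_num))
  split_ifs
  · apply pow_le_pow_of_le_one (by norm_num) (by norm_num); omega
  · positivity

open Classical in
/-- greedy remainders for binary expansion -/
def greedy (y : ℝ) : ℕ → ℝ
  | 0 => y
  | (n+1) => if (2⁻¹:ℝ)^(n+1) ≤ greedy y n then greedy y n - (2⁻¹)^(n+1) else greedy y n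

open Classical in
def gbit (y : ℝ) (n : ℕ) : Bool := decide ((2⁻¹:ℝ)^(n+1) ≤ greedy y n)

lemma bval_surj (y : ℝ) (h0 : 0 ≤ y) (h1 : y ≤ 1) : ∃ b, bval b = y := by
  classical
  set g : ℕ → ℝ := greedy y with hgdef
  set b : ℕ → Bool := gbit y with hbdef
  have hgsucc : ∀ n, g (n+1) = if (2⁻¹:ℝ)^(n+1) ≤ g n then g n - (2⁻¹)^(n+1) else g n := by
    intro n
    rw [hgdef]
    rw [greedy]
  have hinv : ∀ n, 0 ≤ g n ∧ g n ≤ (2⁻¹)^n := by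
    intro n
    induction n with
    | zero => exact ⟨h0, by rw [hgdef, greedy, pow_zero]; exact h1⟩
    | succ n ih =>
      rw [hgsucc]
      split_ifs with h
      · constructor
        · linarith
        · have h2 := ih.2
          rw [pow_succ] at *
          linarith
      · exact ⟨ih.1, by linarith [not_le.mp h]⟩
  have hSn : ∀ n, (∑ j ∈ Finset.range n, (if b j then (2⁻¹:ℝ)^(j+1) else 0)) + g n = y := by
    intro n
    induction n with
    | zero => simp [hgdef, greedy]
    | succ n ih =>
      rw [Finset.sum_range_succ, hgsucc]
      have hb : b n = true ↔ (2⁻¹:ℝ)^(n+1) ≤ g n := by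
        rw [hbdef, hgdef, gbit]
        simp
      by_cases h : (2⁻¹:ℝ)^(n+1) ≤ g n
      · rw [if_pos (hb.mpr h), if_pos h]
        linarith
      · rw [if_neg (fun hh => h (hb.mp hh)), if_neg h]
        linarith
  have hglim : Tendsto g atTop (nhds 0) := by
    apply squeeze_zero (fun n => (hinv n).1) (fun n => (hinv n).2)
    exact tendsto_pow_atTop_nhds_zero_of_lt_one (by norm_num) (by norm_num)
  have hsum := (summable_bterm b).hasSum.tendsto_sum_nat
  have hcomb : Tendsto (fun n => (∑ j ∈ Finset.range n, (if b j then (2⁻¹:ℝ)^(j+1) else 0)) + g n)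
      atTop (nhds (bval b + 0)) := hsum.add hglim
  have hconst : Tendsto (fun _ : ℕ => y) atTop (nhds y) := tendsto_const_nhds
  have : bval b + 0 = y := by
    apply tendsto_nhds_unique _ hconst
    convert hcomb using 2
    exact (hSn _).symm
  exact ⟨b, by linarith⟩

/-- difference bound for bval at first difference -/
lemma bval_diff_le (b b' : ℕ → Bool) (j0 : ℕ) (hlt : ∀ l, l < j0 → b l = b' l) :
    |bval b - bval b'| ≤ (2⁻¹:ℝ)^j0 := by
  have hs := summable_bterm b
  have hs' := summable_bterm b'
  have hd : bval b - bval b'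
      = ∑' j, ((if b j then (2⁻¹:ℝ)^(j+1) else 0) - (if b' j then (2⁻¹:ℝ)^(j+1) else 0)) :=
    (Summable.tsum_sub hs hs').symm
  set d : ℕ → ℝ := fun j => (if b j then (2⁻¹:ℝ)^(j+1) else 0) - (if b' j then (2⁻¹:ℝ)^(j+1) else 0)
    with hdd
  have hsd : Summable d := hs.sub hs'
  have hzero : ∀ l, l < j0 → d l = 0 := by
    intro l hl; simp [hdd, hlt l hl]
  have hsplit : ∑' j, d j = ∑' j, d (j + j0) := by
    rw [← Summable.sum_add_tsum_nat_add j0 hsd]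
    rw [Finset.sum_eq_zero (fun l hl => hzero l (Finset.mem_range.mp hl))]
    ring
  have habs : ∀ j, |d (j + j0)| ≤ (2⁻¹:ℝ)^(j + j0 + 1) := by
    intro j
    have hp : (0:ℝ) ≤ (2⁻¹:ℝ)^(j + j0 + 1) := by positivity
    simp only [hdd]
    split_ifs
    · simp only [sub_self, abs_zero]; exact hp
    · rw [sub_zero, abs_of_nonneg hp]
    · rw [zero_sub, abs_neg, abs_of_nonneg hp]
    · simp only [sub_self, abs_zero]; exact hp
  have hgeo : Summable (fun j : ℕ => (2⁻¹:ℝ)^(j + j0 + 1)) := by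
    apply Summable.of_nonneg_of_le (fun j => by positivity) (fun j => ?_)
      (summable_geometric_of_lt_one (by norm_num : (0:ℝ) ≤ 2⁻¹) (by norm_num))
    apply pow_le_pow_of_le_one (by norm_num) (by norm_num); omega
  have hsum2 : ∑' j : ℕ, (2⁻¹:ℝ)^(j + j0 + 1) = (2⁻¹:ℝ)^j0 := by
    have : ∀ j : ℕ, (2⁻¹:ℝ)^(j + j0 + 1) = (2⁻¹:ℝ)^(j0+1) * (2⁻¹)^j := by
      intro j; rw [← pow_add]; congr 1; omega
    rw [tsum_congr this, tsum_mul_left, tsum_geometric_of_lt_one (by norm_num) (by norm_num)]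
    rw [pow_succ]
    ring
  have hsabs : Summable (fun j => |d (j + j0)|) :=
    Summable.of_nonneg_of_le (fun j => abs_nonneg _) habs hgeo
  rw [hd, hsplit]
  calc |∑' j, d (j + j0)| ≤ ∑' j, |d (j + j0)| := by
        have hn := norm_tsum_le_tsum_norm (f := fun j => d (j + j0))
          (by simpa [Real.norm_eq_abs] using hsabs)
        simpa [Real.norm_eq_abs] using hn
    _ ≤ ∑' j : ℕ, (2⁻¹:ℝ)^(j + j0 + 1) := Summable.tsum_le_tsum habs hsabs hgeo
    _ = (2⁻¹:ℝ)^j0 := hsum2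

lemma dimH_ge_of_family (S : Set ℤ_[3]) (F : (ℕ → Bool) → ℤ_[3]) (K : ℕ)
    (hmem : ∀ b, F b ∈ S)
    (hsep : ∀ b b' : ℕ → Bool, ∀ j : ℕ, (∀ l, l < j → b l = b' l) → b j ≠ b' j →
      (3⁻¹:ℝ)^(13*j + K) ≤ ‖F b - F b'‖) :
    ENNReal.ofReal ((1/13) * (Real.log 2 / Real.log 3)) ≤ dimH S := by
  classical
  have hlog2 : (0:ℝ) < Real.log 2 := Real.log_pos (by norm_num)
  have hlog3 : (0:ℝ) < Real.log 3 := Real.log_pos (by norm_num)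
  set rr : ℝ := Real.log 2 / (13 * Real.log 3) with hrr
  have hrrpos : 0 < rr := by positivity
  set r : NNReal := Real.toNNReal rr with hr
  have hrpos : 0 < r := by
    rw [hr]; exact Real.toNNReal_pos.mpr hrrpos
  have hrcoe : (r : ℝ) = rr := Real.coe_toNNReal _ hrrpos.le
  have firstdiff : ∀ b b' : ℕ → Bool, b ≠ b' →
      ∃ j, (∀ l, l < j → b l = b' l) ∧ b j ≠ b' j := by
    intro b b' hne
    have hex : ∃ j, b j ≠ b' j := by
      by_contra hno
      push_neg at hno
      exact hne (funext hno)
    refine ⟨Nat.find hex, fun l hl => ?_, Nat.find_spec hex⟩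
    by_contra hcon
    exact (Nat.find_min hex hl) hcon
  have hinj : Function.Injective F := by
    intro b b' hFb
    by_contra hne
    obtain ⟨j, hlt, hj⟩ := firstdiff b b' hne
    have h := hsep b b' j hlt hj
    rw [hFb, sub_self, norm_zero] at h
    have : (0:ℝ) < (3⁻¹:ℝ)^(13*j+K) := by positivity
    linarith
  set f : ℤ_[3] → ℝ := Function.extend F bval (fun _ => 0) with hf
  have hfF : ∀ b, f (F b) = bval b := fun b => hinj.extend_apply bval _ b
  have hkey : ∀ b b' : ℕ → Bool, |bval b - bval b'| ≤ (2:ℝ)^K * ‖F b - F b'‖ ^ (r:ℝ) := by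
    intro b b'
    rcases eq_or_ne b b' with rfl | hne
    · simp only [sub_self, abs_zero]
      positivity
    · obtain ⟨j, hlt, hj⟩ := firstdiff b b' hne
      have hup := bval_diff_le b b' j hlt
      have hlow := hsep b b' j hlt hj
      set m : ℕ := 13*j + K with hm
      have hepos : (0:ℝ) < (3⁻¹:ℝ)^m := by positivity
      have hcalc : ((3⁻¹:ℝ)^m) ^ (r:ℝ) = (2:ℝ) ^ (-(m:ℝ)/13) := by
        rw [← Real.rpow_natCast (3⁻¹:ℝ) m, ← Real.rpow_mul (by norm_num : (0:ℝ) ≤ 3⁻¹)]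
        rw [Real.rpow_def_of_pos (by norm_num : (0:ℝ) < 3⁻¹),
          Real.rpow_def_of_pos (by norm_num : (0:ℝ) < 2)]
        congr 1
        rw [Real.log_inv, hrcoe, hrr]
        field_simp
      have hrpow_mono : ((3⁻¹:ℝ)^m) ^ (r:ℝ) ≤ ‖F b - F b'‖ ^ (r:ℝ) :=
        Real.rpow_le_rpow hepos.le hlow (by positivity)
      have e1 : (2⁻¹:ℝ)^j = (2:ℝ)^(-(j:ℝ)) := by
        rw [Real.rpow_neg (by norm_num : (0:ℝ) ≤ 2), Real.rpow_natCast, inv_pow]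
      have e2 : (2:ℝ)^(-(j:ℝ)) ≤ (2:ℝ)^((K:ℝ)) * (2:ℝ)^(-(m:ℝ)/13) := by
        rw [← Real.rpow_add (by norm_num : (0:ℝ) < 2)]
        apply (Real.rpow_le_rpow_left_iff (by norm_num : (1:ℝ) < 2)).mpr
        rw [hm]
        push_cast
        have hK : (0:ℝ) ≤ (K:ℝ) := Nat.cast_nonneg _
        have hj0 : (0:ℝ) ≤ (j:ℝ) := Nat.cast_nonneg _
        linarith
      have e3 : (2:ℝ)^((K:ℝ)) = (2:ℝ)^K := Real.rpow_natCast 2 K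
      calc |bval b - bval b'| ≤ (2⁻¹:ℝ)^j := hup
        _ = (2:ℝ)^(-(j:ℝ)) := e1
        _ ≤ (2:ℝ)^((K:ℝ)) * (2:ℝ)^(-(m:ℝ)/13) := e2
        _ = (2:ℝ)^K * ((3⁻¹:ℝ)^m) ^ (r:ℝ) := by rw [e3, hcalc]
        _ ≤ (2:ℝ)^K * ‖F b - F b'‖ ^ (r:ℝ) := by
            apply mul_le_mul_of_nonneg_left hrpow_mono (by positivity)
  have holder : HolderOnWith ((2:ℝ≥0)^K) r f (Set.range F) := by
    rintro u ⟨b, rfl⟩ v ⟨b', rfl⟩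
    rw [hfF, hfF]
    rcases eq_or_ne (F b) (F b') with heq | hne
    · have hbb : b = b' := hinj heq
      subst hbb
      simp
    · have hnorm : 0 < ‖F b - F b'‖ := by
        rw [norm_pos_iff, sub_ne_zero]; exact hne
      have hk := hkey b b'
      rw [edist_dist, Real.dist_eq, edist_dist, dist_eq_norm]
      calc ENNReal.ofReal |bval b - bval b'|
          ≤ ENNReal.ofReal ((2:ℝ)^K * ‖F b - F b'‖ ^ (r:ℝ)) := ENNReal.ofReal_le_ofReal hk
        _ = ENNReal.ofReal ((2:ℝ)^K) * ENNReal.ofReal (‖F b - F b'‖ ^ (r:ℝ)) :=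
            ENNReal.ofReal_mul (by positivity)
        _ = (((2:ℝ≥0)^K : ℝ≥0) : ℝ≥0∞) * ENNReal.ofReal (‖F b - F b'‖) ^ (r:ℝ) := by
            rw [← ENNReal.ofReal_rpow_of_pos hnorm]
            congr 1
            rw [ENNReal.ofReal_pow (by norm_num : (0:ℝ) ≤ 2)]
            norm_num
  have hIcc : dimH (Set.Icc (0:ℝ) 1) = 1 := by
    rw [Real.dimH_of_nonempty_interior (E := ℝ)]
    · simp
    · rw [interior_Icc]; exact ⟨1/2, by norm_num⟩
  have hsub : Set.Icc (0:ℝ) 1 ⊆ f '' (Set.range F) := by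
    intro y hy
    obtain ⟨b, hb⟩ := bval_surj y hy.1 hy.2
    exact ⟨F b, ⟨b, rfl⟩, by rw [hfF]; exact hb⟩
  have h1 : (1:ℝ≥0∞) ≤ dimH (f '' Set.range F) := hIcc ▸ dimH_mono hsub
  have h2 := holder.dimH_image_le hrpos
  have h3 : dimH (Set.range F) ≤ dimH S := dimH_mono (range_subset_iff.mpr hmem)
  have h4 : (1:ℝ≥0∞) ≤ dimH S / r :=
    le_trans h1 (le_trans h2 (ENNReal.div_le_div_right h3 _))
  have h5 : (r : ℝ≥0∞) ≤ dimH S := by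
    rw [ENNReal.le_div_iff_mul_le (Or.inl (by simpa using hrpos.ne'))
      (Or.inl ENNReal.coe_ne_top), one_mul] at h4
    exact h4
  have hfin : ENNReal.ofReal ((1/13) * (Real.log 2 / Real.log 3)) = (r:ℝ≥0∞) := by
    have hq : (1/13) * (Real.log 2 / Real.log 3) = rr := by rw [hrr]; ring
    rw [hq, hr]
    rfl
  rw [hfin]
  exact h5



lemma dm_div (L t s : ℕ) (h : s < L) : (L * t + s) / L = t := by
  rw [Nat.mul_add_div (by omega)]
  rw [Nat.div_eq_of_lt h]
  omega

lemma dm_mod (L t s : ℕ) (h : s < L) : (L * t + s) % L = s := by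
  rw [Nat.mul_add_mod]
  exact Nat.mod_eq_of_lt h

/-- Scheme R digits: blocks of length 2k+2, bit t chooses between
`1^(k+1) 0^(k+1)` and `1^(2k+2)`. -/
def aR (k : ℕ) (b : ℕ → Bool) (i : ℕ) : ℕ :=
  if b (i / (2*k+2)) then 1 else if i % (2*k+2) ≤ k then 1 else 0

lemma aR_le_one (k : ℕ) (b : ℕ → Bool) (i : ℕ) : aR k b i ≤ 1 := by
  rw [aR]; split_ifs <;> omega

lemma aR_eval (k : ℕ) (b : ℕ → Bool) (t s : ℕ) (hs : s < 2*k+2) :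
    aR k b ((2*k+2) * t + s) = if b t then 1 else if s ≤ k then 1 else 0 := by
  rw [aR, dm_div _ _ _ hs, dm_mod _ _ _ hs]

lemma aR_h2 (k : ℕ) (b : ℕ → Bool) :
    ∀ j, aR k b (j+1) ≠ aR k b j → aR k b (j+1+k) = aR k b (j+1) := by
  intro j hne
  set L := 2*k+2 with hL
  set t := (j+1) / L with ht
  set r := (j+1) % L with hrdef
  have hdm : L * t + r = j + 1 := Nat.div_add_mod (j+1) L
  have hrL : r < L := Nat.mod_lt _ (by omega)
  rcases Nat.lt_or_ge r 1 with hr0 | hr1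
  · -- r = 0 : start of a block, value 1; target also 1
    have hr : r = 0 := by omega
    have hi : j + 1 = L * t + 0 := by omega
    have hik : j + 1 + k = L * t + k := by omega
    rw [hik, hi, aR_eval k b t 0 (by omega), aR_eval k b t k (by omega)]
    split_ifs <;> omega
  · rcases Nat.lt_or_ge r (k+1) with hrk | hrk1
    · -- 1 ≤ r ≤ k : no change, contradiction
      exfalso
      apply hne
      have hi : j + 1 = L * t + r := by omega
      have hj : j = L * t + (r-1) := by omega
      rw [hi, hj, aR_eval k b t r (by omega), aR_eval k b t (r-1) (by omega)]
      rw [if_pos (by omega : r ≤ k), if_pos (by omega : r - 1 ≤ k)]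
    · rcases Nat.lt_or_ge r (k+2) with hrk2 | hrk3
      · -- r = k+1 : change iff bit false; then value 0, target 0
        have hr : r = k+1 := by omega
        have hi : j + 1 = L * t + (k+1) := by omega
        have hj : j = L * t + k := by omega
        have hik : j + 1 + k = L * t + (2*k+1) := by omega
        rw [hik, hi, aR_eval k b t (k+1) (by omega), aR_eval k b t (2*k+1) (by omega)]
        rw [hi, hj, aR_eval k b t (k+1) (by omega), aR_eval k b t k (by omega)] at hne
        rw [if_pos (by omega : k ≤ k)] at hne
        rcases hb : b t with _ | _
        · simp only [Bool.false_eq_true, if_false]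
          rw [if_neg (by omega : ¬ (k+1 ≤ k)), if_neg (by omega : ¬ (2*k+1 ≤ k))]
        · simp at hne; rw [hb] at hne; exact Bool.noConfusion hne
      · -- k+2 ≤ r < L : no change, contradiction
        exfalso
        apply hne
        have hi : j + 1 = L * t + r := by omega
        have hj : j = L * t + (r-1) := by omega
        rw [hi, hj, aR_eval k b t r (by omega), aR_eval k b t (r-1) (by omega)]
        rw [if_neg (by omega : ¬ (r ≤ k)), if_neg (by omega : ¬ (r - 1 ≤ k))]

lemma aR_h3 (k : ℕ) (hk : 1 ≤ k) (b : ℕ → Bool) : aR k b 0 = 1 → aR k b k = 1 := by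
  intro _
  rw [aR, Nat.div_eq_of_lt (by omega), Nat.mod_eq_of_lt (by omega), if_pos (le_refl k)]
  split_ifs <;> rfl

/-- agreement below the separation position -/
lemma aR_sep (k : ℕ) (b b' : ℕ → Bool) (j0 : ℕ)
    (hlt : ∀ l, l < j0 → b l = b' l) (hj : b j0 ≠ b' j0) :
    (∀ i, i < (2*k+2) * j0 + (k+1) → aR k b i = aR k b' i)
    ∧ aR k b ((2*k+2) * j0 + (k+1)) ≠ aR k b' ((2*k+2) * j0 + (k+1)) := by
  constructor
  · intro i hi
    set L := 2*k+2 with hL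
    set t := i / L with ht
    set r := i % L with hrdef
    have hdm : L * t + r = i := Nat.div_add_mod i L
    have hrL : r < L := Nat.mod_lt _ (by omega)
    rcases Nat.lt_or_ge t j0 with htj | htj
    · rw [aR, aR, hlt t htj]
    · -- t = j0 and r ≤ k
      have htj0 : t = j0 := by
        by_contra hne'
        have ht1 : j0 + 1 ≤ t := by omega
        have hmul : L * (j0+1) ≤ L * t := Nat.mul_le_mul_left L ht1
        rw [Nat.mul_succ] at hmul
        omega
      rw [htj0] at hdm
      have hrk : r ≤ k := by omega
      have hi2 : i = L * j0 + r := by omega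
      rw [htj0] at ht
      rw [hi2, aR_eval k b j0 r (by omega), aR_eval k b' j0 r (by omega)]
      rw [if_pos hrk]
      split_ifs <;> rfl
  · rw [aR_eval k b j0 (k+1) (by omega), aR_eval k b' j0 (k+1) (by omega)]
    rw [if_neg (by omega : ¬ (k+1 ≤ k))]
    rcases hb : b j0 with _ | _ <;> rcases hb' : b' j0 with _ | _ <;>
      simp_all
/-- Scheme C block pattern: within a period of length `x`, chains sit at residues
`7m, 7m+1, 7m+2` for `m < M` (two mandatory 1s then one free digit). -/
def AC (M : ℕ) (b : ℕ → Bool) (r t : ℕ) : ℕ :=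
  if r / 7 < M ∧ r % 7 ≤ 1 then 1
  else if r / 7 < M ∧ r % 7 = 2 then (if b (M * t + r / 7) then 1 else 0) else 0

def aC (x M : ℕ) (b : ℕ → Bool) (i : ℕ) : ℕ := AC M b (i % x) (i / x)

lemma AC_one (M : ℕ) (b : ℕ → Bool) {r : ℕ} (t : ℕ) (h1 : r/7 < M) (h2 : r%7 ≤ 1) :
    AC M b r t = 1 := by
  rw [AC, if_pos ⟨h1, h2⟩]

lemma AC_bit (M : ℕ) (b : ℕ → Bool) {r : ℕ} (t : ℕ) (h1 : r/7 < M) (h2 : r%7 = 2) :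
    AC M b r t = if b (M * t + r / 7) then 1 else 0 := by
  rw [AC, if_neg (by omega), if_pos ⟨h1, h2⟩]

lemma AC_zero (M : ℕ) (b : ℕ → Bool) {r : ℕ} (t : ℕ) (h : M ≤ r/7 ∨ 3 ≤ r%7) :
    AC M b r t = 0 := by
  rw [AC, if_neg (by omega), if_neg (by omega)]

lemma AC_le_one (M : ℕ) (b : ℕ → Bool) (r t : ℕ) : AC M b r t ≤ 1 := by
  rw [AC]; split_ifs <;> omega

lemma aC_le_one (x M : ℕ) (b : ℕ → Bool) (i : ℕ) : aC x M b i ≤ 1 := AC_le_one _ _ _ _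

lemma aC_eval (x M : ℕ) (b : ℕ → Bool) (t s : ℕ) (hs : s < x) :
    aC x M b (x * t + s) = AC M b s t := by
  rw [aC, dm_div _ _ _ hs, dm_mod _ _ _ hs]

lemma aC_h2 (x M : ℕ) (hx : 5 ≤ x) (hM1 : 1 ≤ M) (hM2 : 7*M ≤ x+2) (b : ℕ → Bool) :
    ∀ j, aC x M b (j+1) ≠ aC x M b j → aC x M b (j+1+(x+1)) = aC x M b (j+1) := by
  intro j hne
  set t := (j+1) / x with ht
  set r := (j+1) % x with hrd
  have hdm : x * t + r = j + 1 := Nat.div_add_mod _ _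
  have hrx : r < x := Nat.mod_lt _ (by omega)
  have hi : j + 1 = x * t + r := hdm.symm
  have hxt1 : x * (t+1) = x * t + x := by ring
  have hnext : j + 1 + (x+1) = x * (t+1) + (r+1) := by omega
  have hprev : 1 ≤ r → j = x * t + (r - 1) := by intro h; omega
  rcases Nat.lt_or_ge (r/7) M with hm | hm
  · have hr7 : r = 7 * (r/7) + r % 7 := (Nat.div_add_mod r 7).symm
    have hbound : 7 * (r/7) + 7 ≤ x + 2 := by
      have h1 : r/7 + 1 ≤ M := hm
      have h2 := Nat.mul_le_mul_left 7 h1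
      omega
    rcases (by omega : r % 7 = 0 ∨ r % 7 = 1 ∨ r % 7 = 2 ∨ r % 7 = 3 ∨ (4 ≤ r % 7 ∧ r % 7 ≤ 6))
      with h7 | h7 | h7 | h7 | h7
    · -- δ = 0 : value 1, next value 1
      rw [hnext, hi, aC_eval _ _ _ _ _ (by omega), aC_eval _ _ _ _ _ hrx]
      rw [AC_one M b t (by omega) (by omega), AC_one M b (t+1) (by omega) (by omega)]
    · -- δ = 1 : no change, contradiction
      exfalso; apply hne
      rw [hi, hprev (by omega), aC_eval _ _ _ _ _ hrx, aC_eval _ _ _ _ _ (by omega)]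
      rw [AC_one M b t (by omega) (by omega), AC_one M b t (r := r-1) (by omega) (by omega)]
    · -- δ = 2 : free digit
      rcases hbt : b (M * t + r/7) with _ | _
      · -- bit false : value 0, next value 0
        rw [hnext, hi, aC_eval _ _ _ _ _ (by omega), aC_eval _ _ _ _ _ hrx]
        rw [AC_bit M b t (by omega) h7, AC_zero M b (t+1) (r := r+1) (by omega), hbt]
        simp
      · -- bit true : value 1 = previous, contradiction
        exfalso; apply hne
        rw [hi, hprev (by omega), aC_eval _ _ _ _ _ hrx, aC_eval _ _ _ _ _ (by omega)]
        rw [AC_bit M b t (by omega) h7, AC_one M b t (r := r-1) (by omega) (by omega), hbt]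
        simp
    · -- δ = 3 : value 0, next value 0
      rw [hnext, hi, aC_eval _ _ _ _ _ (by omega), aC_eval _ _ _ _ _ hrx]
      rw [AC_zero M b t (by omega), AC_zero M b (t+1) (r := r+1) (by omega)]
    · -- δ ∈ [4,6] : no change, contradiction
      exfalso; apply hne
      rw [hi, hprev (by omega), aC_eval _ _ _ _ _ hrx, aC_eval _ _ _ _ _ (by omega)]
      rw [AC_zero M b t (by omega), AC_zero M b t (r := r-1) (by omega)]
  · -- r ≥ 7M : zero region, contradiction
    exfalso; apply hne
    have hr1 : 7 ≤ r := by
      have := Nat.mul_le_mul_left 7 hm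
      have h7r : 7 * (r/7) ≤ r := Nat.mul_div_le r 7
      omega
    rw [hi, hprev (by omega), aC_eval _ _ _ _ _ hrx, aC_eval _ _ _ _ _ (by omega)]
    rw [AC_zero M b t (Or.inl hm), AC_zero M b t (r := r-1) (by omega)]

lemma aC_h3 (x M : ℕ) (hx : 5 ≤ x) (hM1 : 1 ≤ M) (b : ℕ → Bool) :
    aC x M b 0 = 1 ∧ aC x M b (x+1) = 1 := by
  constructor
  · have h0 : (0:ℕ) = x * 0 + 0 := by omega
    rw [h0, aC_eval _ _ _ _ _ (by omega), AC_one M b 0 (by omega) (by omega)]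
  · have h0 : x + 1 = x * 1 + 1 := by omega
    rw [h0, aC_eval _ _ _ _ _ (by omega), AC_one M b 1 (by omega) (by omega)]

lemma aC_sep (x M : ℕ) (hx : 5 ≤ x) (hM1 : 1 ≤ M) (hM2 : 7*M ≤ x+2) (hM3 : x ≤ 13*M)
    (b b' : ℕ → Bool) (j0 : ℕ) (hlt : ∀ l, l < j0 → b l = b' l) (hj : b j0 ≠ b' j0) :
    ∃ v, v ≤ 13 * j0 + x + 2 ∧ (∀ i, i < v → aC x M b i = aC x M b' i)
      ∧ aC x M b v ≠ aC x M b' v := by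
  set td := j0 / M with htd
  set md := j0 % M with hmd
  have hdm0 : M * td + md = j0 := Nat.div_add_mod _ _
  have hmdM : md < M := Nat.mod_lt _ (by omega)
  have hresbound : 7 * md + 2 < x := by
    have := Nat.mul_le_mul_left 7 hmdM
    omega
  refine ⟨x * td + (7 * md + 2), ?_, ?_, ?_⟩
  · -- bound v ≤ 13 j0 + x + 2
    have e1 : x * td ≤ 13 * (M * td) := by
      calc x * td ≤ (13 * M) * td := Nat.mul_le_mul_right td hM3
        _ = 13 * (M * td) := by ring
    have e2 : 7 * md ≤ 13 * md := by omega
    omega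
  · -- agreement below v
    intro i hiv
    set t' := i / x with ht'
    set r' := i % x with hr'
    have hdm : x * t' + r' = i := Nat.div_add_mod _ _
    have hrx : r' < x := Nat.mod_lt _ (by omega)
    rw [aC, aC, ← ht', ← hr']
    rcases Nat.lt_or_ge (r'/7) M with hm | hm
    · rcases (by omega : r' % 7 ≤ 1 ∨ r' % 7 = 2 ∨ 3 ≤ r' % 7) with h7 | h7 | h7
      · rw [AC_one M b t' hm h7, AC_one M b' t' hm h7]
      · rw [AC_bit M b t' hm h7, AC_bit M b' t' hm h7]
        have hn : M * t' + r'/7 < j0 := by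
          by_contra hge
          push_neg at hge
          -- then i ≥ v
          have hr'7 : r' = 7 * (r'/7) + 2 := by omega
          rcases Nat.lt_trichotomy t' td with hlt' | heq' | hgt'
          · -- t' < td : n ≤ M td - 1 < j0
            have h1 : M * (t'+1) ≤ M * td := Nat.mul_le_mul_left M hlt'
            have h2 : M * (t'+1) = M * t' + M := by ring
            omega
          · -- t' = td : r'/7 ≥ md, so i ≥ v
            rw [heq'] at hdm hge
            have : 7 * md ≤ 7 * (r'/7) := by omega
            omega
          · -- t' > td : i ≥ x(td+1) ≥ v
            have h1 : x * (td+1) ≤ x * t' := Nat.mul_le_mul_left x hgt'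
            have h2 : x * (td+1) = x * td + x := by ring
            omega
        rw [hlt _ hn]
      · rw [AC_zero M b t' (Or.inr h7), AC_zero M b' t' (Or.inr h7)]
    · rw [AC_zero M b t' (Or.inl hm), AC_zero M b' t' (Or.inl hm)]
  · -- difference at v
    rw [aC_eval _ _ _ _ _ hresbound, aC_eval _ _ _ _ _ hresbound]
    have hd7 : (7 * md + 2) / 7 = md := by omega
    have hm7 : (7 * md + 2) % 7 = 2 := by omega
    rw [AC_bit M b td (by omega) hm7, AC_bit M b' td (by omega) hm7]
    rw [hd7, hdm0]
    rcases hb : b j0 with _ | _ <;> rcases hb' : b' j0 with _ | _ <;> simp_all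

end PfAux

open PfAux in
/-- For every k ≥ 1, dim_H(C(1, P_k)) ≥ (1/13)·log₃ 2, where P_k = 2·3^k + 1. -/
theorem dimH_C1_Pk_ge (k : ℕ) (hk : 1 ≤ k) :
    ENNReal.ofReal ((1 / 13) * (Real.log 2 / Real.log 3)) ≤ dimH (C1 (2 * 3 ^ k + 1)) := by
  rcases Nat.lt_or_ge k 6 with hk6 | hk6
  · -- small k : run scheme
    apply dimH_ge_of_family _ (fun b => dig3 (aR k b)) (13*(k+1))
    · intro b
      exact mem_C1_of_valid k hk _ (aR_le_one k b) (aR_h2 k b) (aR_h3 k hk b)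
    · intro b b' j hlt hj
      obtain ⟨hagree, hdiff⟩ := aR_sep k b b' j hlt hj
      rw [norm_dig3_sub _ _ (aR_le_one k b) (aR_le_one k b') _ hagree hdiff]
      apply pow_le_pow_of_le_one (by norm_num) (by norm_num)
      have hmul : (2*k+2)*j ≤ 13*j := Nat.mul_le_mul_right j (by omega)
      omega
  · -- large k : chain scheme
    set x := k - 1 with hxd
    have hxk : k = x + 1 := by omega
    set M := max 1 (x/7) with hM
    have hx5 : 5 ≤ x := by omega
    have hM1 : 1 ≤ M := le_max_left _ _
    have hM2 : 7*M ≤ x+2 := by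
      rcases Nat.le_total (x/7) 1 with h | h
      · rw [hM, max_eq_left h]; omega
      · rw [hM, max_eq_right h]; omega
    have hM3 : x ≤ 13*M := by
      rcases Nat.le_total (x/7) 1 with h | h
      · rw [hM, max_eq_left h]; omega
      · rw [hM, max_eq_right h]; omega
    apply dimH_ge_of_family _ (fun b => dig3 (aC x M b)) (13*(k+1))
    · intro b
      have h2 := aC_h2 x M hx5 hM1 hM2 b
      rw [← hxk] at h2
      apply mem_C1_of_valid k hk _ (aC_le_one x M b) h2
      intro _
      rw [hxk]
      exact (aC_h3 x M hx5 hM1 b).2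
    · intro b b' j hlt hj
      obtain ⟨v, hvb, hagree, hdiff⟩ := aC_sep x M hx5 hM1 hM2 hM3 b b' j hlt hj
      rw [norm_dig3_sub _ _ (aC_le_one x M b) (aC_le_one x M b') v hagree hdiff]
      apply pow_le_pow_of_le_one (by norm_num) (by norm_num)
      omega

end
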